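/- Let L be a free abelian group of finite rank, A a commutative ring, and R the J-adic completion of A[L] with I = JR. If N is a positive integer invertible in A, then the group of 1-units 1 + I ⊆ R^× has no nontrivial N-torsion: every x ∈ R with x ≡ 1 (mod I) and x^N = 1 satisfies x = 1. Consequently every group homomorphism from a finite abelian group of exponent dividing N to (1+I)^× is trivial. -/

import Mathlib

set_option maxHeartbeats 1000000
set_option synthInstance.maxHeartbeats 400000

open AddMonoidAlgebra

section generic

variable (A : Type*) [CommRing A] (B : Type*) [CommRing B] [Algebra A B] (J : Ideal B)

/-- Transition maps of the inverse system `(B/J^k)_k`. -/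
noncomputable def idealTrans (k : ℕ) : B ⧸ J ^ (k + 1) →+* B ⧸ J ^ k :=
  Ideal.Quotient.factor (Ideal.pow_le_pow_right (Nat.le_succ k))

/-- The `J`-adic completion `lim_k B/J^k`, realized as a subalgebra of the product
`∏ k, B/J^k` (the compatible families). -/
noncomputable def adicLim : Subalgebra A (∀ k : ℕ, B ⧸ J ^ k) where
  carrier := {f | ∀ k, idealTrans B J k (f (k + 1)) = f k}
  mul_mem' := fun ha hb k => by
    rw [Pi.mul_apply, Pi.mul_apply, map_mul, ha k, hb k]
  add_mem' := fun ha hb k => by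
    rw [Pi.add_apply, Pi.add_apply, map_add, ha k, hb k]
  algebraMap_mem' := fun a k => by
    rw [Pi.algebraMap_apply, Pi.algebraMap_apply,
      IsScalarTower.algebraMap_apply A B (B ⧸ J ^ (k + 1)),
      Ideal.Quotient.algebraMap_eq, idealTrans, Ideal.Quotient.factor_mk,
      IsScalarTower.algebraMap_apply A B (B ⧸ J ^ k), Ideal.Quotient.algebraMap_eq]

/-- The canonical map `B → lim_k B/J^k`. -/
noncomputable def adicLimOf : B →ₐ[A] adicLim A B J :=
  AlgHom.codRestrict (AlgHom.pi (R := A) (A := fun k => B ⧸ J ^ k)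
      (fun k => Ideal.Quotient.mkₐ A (J ^ k)))
    (adicLim A B J) (fun x k => by
      simp only [AlgHom.pi_apply, Ideal.Quotient.mkₐ_eq_mk, idealTrans,
        Ideal.Quotient.factor_mk])

end generic

section grpring

variable (A : Type*) [CommRing A] (L : Type*) [AddCommGroup L]

/-- The augmentation map of the group ring `A[L]`, sending each group element `δ_ℓ` to `1`. -/
noncomputable def aug : AddMonoidAlgebra A L →ₐ[A] A :=
  AddMonoidAlgebra.lift A A L 1

/-- The augmentation ideal `J ⊆ A[L]`. -/
noncomputable def augIdeal : Ideal (AddMonoidAlgebra A L) :=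
  RingHom.ker (aug A L)

/-- `R`, the `J`-adic completion of the group ring `A[L]`. -/
noncomputable abbrev RR := adicLim A (AddMonoidAlgebra A L) (augIdeal A L)

end grpring

section aux

variable {S : Type*} [CommRing S]

lemma aux_pow_expand {y : S} (hy : IsNilpotent y) :
    ∀ N : ℕ, ∃ c : S, (1 + y) ^ N = 1 + y * c ∧ IsNilpotent (c - (N : S)) := by
  intro N
  induction N with
  | zero => exact ⟨0, by simp, by simp⟩
  | succ n ih =>
    obtain ⟨c, hc1, hc2⟩ := ih
    refine ⟨1 + c + y * c, ?_, ?_⟩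
    · rw [pow_succ, hc1]; ring
    · have : (1 + c + y * c) - ((n + 1 : ℕ) : S) = (c - (n : S)) + y * c := by
        push_cast; ring
      rw [this]
      exact mem_nilradical.mp ((nilradical S).add_mem (mem_nilradical.mpr hc2)
        (mem_nilradical.mpr ((Commute.all y c).isNilpotent_mul_right hy)))

lemma aux_eq_one {N : ℕ} (hN : IsUnit (N : S)) {y : S} (hy : IsNilpotent y)
    (h : (1 + y) ^ N = 1) : y = 0 := by
  obtain ⟨c, hc1, hc2⟩ := aux_pow_expand hy N
  have hyc : y * c = 0 := by
    have h1 : 1 + y * c = 1 := by rw [← hc1, h]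
    exact add_eq_left.mp (by rwa [add_comm] at h1)
  have hcu : IsUnit c := by
    have := hc2.isUnit_add_left_of_commute hN (Commute.all _ _)
    rwa [add_sub_cancel] at this
  obtain ⟨u, hu⟩ := hcu
  have : y = y * c * ↑u⁻¹ := by rw [← hu, mul_assoc, Units.mul_inv, mul_one]
  rw [this, hyc, zero_mul]

end aux

/-- If `N` is invertible in `A`, the group of `1`-units `1 + I ⊆ R^×` of the
completed group ring `R` has no nontrivial `N`-torsion, and consequently every homomorphism from
a finite abelian group of exponent dividing `N` to `(1+I)^×` is trivial. -/
theorem statement13 (A : Type*) [CommRing A] (L : Type*) [AddCommGroup L]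
    [Module.Free ℤ L] [Module.Finite ℤ L]
    (N : ℕ) (hN0 : 0 < N) (hN : IsUnit (N : A)) :
    (∀ x : RR A L,
        x - 1 ∈ (augIdeal A L).map (adicLimOf A (AddMonoidAlgebra A L) (augIdeal A L)).toRingHom →
        x ^ N = 1 → x = 1) ∧
    (∀ (G : Type) [CommGroup G] [Finite G], (∀ g : G, g ^ N = 1) →
      ∀ f : G →* (RR A L)ˣ,
        (∀ g : G, ((f g : RR A L) - 1 ∈
          (augIdeal A L).map (adicLimOf A (AddMonoidAlgebra A L) (augIdeal A L)).toRingHom)) →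
        f = 1) := by
  set B := AddMonoidAlgebra A L
  set J := augIdeal A L
  have part1 : ∀ x : RR A L,
      x - 1 ∈ J.map (adicLimOf A B J).toRingHom → x ^ N = 1 → x = 1 := by
    intro x hx hxN
    -- componentwise
    ext k
    -- the projection ring hom
    let πk : RR A L →+* B ⧸ J ^ k :=
      (Pi.evalRingHom (fun k => B ⧸ J ^ k) k).comp (Subalgebra.val _).toRingHom
    have hcomp : πk.comp (adicLimOf A B J).toRingHom = Ideal.Quotient.mk (J ^ k) :=
      RingHom.ext fun b => rfl
    have hyJ : πk (x - 1) ∈ J.map (Ideal.Quotient.mk (J ^ k)) := by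
      have := Ideal.mem_map_of_mem πk hx
      rwa [Ideal.map_map, hcomp] at this
    have hnil : IsNilpotent (πk (x - 1)) := by
      refine ⟨k, ?_⟩
      have : (πk (x - 1)) ^ k ∈ (J.map (Ideal.Quotient.mk (J ^ k))) ^ k :=
        Ideal.pow_mem_pow hyJ k
      rw [← Ideal.map_pow, Ideal.map_quotient_self] at this
      simpa using this
    have hNk : IsUnit ((N : ℕ) : B ⧸ J ^ k) := by
      have := hN.map (algebraMap A (B ⧸ J ^ k))
      rwa [map_natCast] at this
    have h1 : (1 + πk (x - 1)) ^ N = 1 := by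
      rw [map_sub, map_one, add_sub_cancel, ← map_pow, hxN, map_one]
    have := aux_eq_one hNk hnil h1
    have hx1 : πk x = 1 := by
      rw [map_sub, map_one, sub_eq_zero] at this
      exact this
    exact hx1
  refine ⟨part1, ?_⟩
  intro G _ _ hG f hf
  refine MonoidHom.ext fun g => ?_
  have h1 : ((f g : RR A L)) ^ N = 1 := by
    rw [← Units.val_pow_eq_pow_val, ← map_pow, hG g, map_one, Units.val_one]
  rw [MonoidHom.one_apply]
  have h2 : ((f g : RR A L)) = ((1 : (RR A L)ˣ) : RR A L) := by
    rw [Units.val_one]; exact part1 _ (hf g) h1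
  exact Units.ext h2
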